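/- Let m = 2^t for a positive integer t and let P = (ℤ/2)[α]/⟨α^{m+1}⟩. Then in the tensor square P ⊗_{ℤ/2} P one has (α⊗1 + 1⊗α)^{2m−1} = α^{m−1} ⊗ α^m + α^m ⊗ α^{m−1}, and this element is nonzero. -/

import Mathlib

open scoped TensorProduct

noncomputable section

/-- The ring `P = (ℤ/2)[α]/⟨α^{m+1}⟩`, the mod-2 cohomology ring of `ℝPᵐ`. -/
abbrev ProjRing (m : ℕ) : Type :=
  Polynomial (ZMod 2) ⧸ Ideal.span {(Polynomial.X : Polynomial (ZMod 2)) ^ (m + 1)}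

/-- The class `α` of `X` in `P`. -/
def palpha (m : ℕ) : ProjRing m := Ideal.Quotient.mk _ Polynomial.X

end

open Polynomial Finset in
/-- All binomial coefficients `C(2^s − 1, k)` are odd. -/
lemma choose_two_pow_sub_one (s k : ℕ) (hk : k < 2 ^ s) :
    ((Nat.choose (2 ^ s - 1) k : ℕ) : ZMod 2) = 1 := by
  have hX1 : ((X : (ZMod 2)[X]) + 1) ≠ 0 := by
    intro h
    have := congrArg (fun p => Polynomial.coeff p 1) h
    simp [coeff_one] at this
  have key : ((X : (ZMod 2)[X]) + 1) ^ (2 ^ s - 1) = ∑ i ∈ range (2 ^ s), X ^ i := by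
    apply mul_left_cancel₀ hX1
    have h1 : ((X : (ZMod 2)[X]) + 1) * ((X + 1) ^ (2 ^ s - 1)) = (X + 1) ^ (2 ^ s) := by
      rw [← pow_succ']
      congr 1
      omega
    have h2 : ((X : (ZMod 2)[X]) + 1) ^ (2 ^ s) = X ^ (2 ^ s) + 1 := by
      rw [add_pow_char_pow]
      simp
    have h3 : ((X : (ZMod 2)[X]) + 1) * (∑ i ∈ range (2 ^ s), X ^ i) = X ^ (2 ^ s) + 1 := by
      have := geom_sum_mul (X : (ZMod 2)[X]) (2 ^ s)
      rw [CharTwo.sub_eq_add, CharTwo.sub_eq_add] at this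
      rw [mul_comm, this]
    rw [h1, h2, h3]
  have := congrArg (fun p => Polynomial.coeff p k) key
  rw [coeff_X_add_one_pow] at this
  rw [this]
  rw [Polynomial.finset_sum_coeff]
  simp only [coeff_X_pow]
  rw [Finset.sum_eq_single k]
  · simp
  · intro j _ hj; simp [Ne.symm hj]
  · intro h; exact absurd (Finset.mem_range.2 hk) h

noncomputable section ProjBasisSection

/-- The power basis `1, α, …, α^m` of `P`. -/
def projBasis (m : ℕ) : Module.Basis (Fin (m + 1)) (ZMod 2) (ProjRing m) :=
  ((AdjoinRoot.powerBasis' (g := (Polynomial.X : Polynomial (ZMod 2)) ^ (m+1))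
     (Polynomial.monic_X_pow _)).basis).reindex (finCongr (by simp))

lemma projBasis_apply (m : ℕ) (i : Fin (m+1)) : projBasis m i = palpha m ^ (i : ℕ) := by
  rw [projBasis]; erw [Module.Basis.reindex_apply, PowerBasis.basis_eq_pow]
  rfl

end ProjBasisSection

set_option maxHeartbeats 1000000 in
set_option synthInstance.maxHeartbeats 400000 in
/-- For `m = 2^t` (`t` positive), in `P ⊗ P` one has
`(α⊗1 + 1⊗α)^{2m-1} = α^{m-1} ⊗ α^m + α^m ⊗ α^{m-1}`, and this element is nonzero. -/
theorem projRing_tensor_alpha_pow (m t : ℕ) (ht : 0 < t) (hm : m = 2 ^ t) :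
    (((palpha m) ⊗ₜ[ZMod 2] (1 : ProjRing m) +
          (1 : ProjRing m) ⊗ₜ[ZMod 2] (palpha m)) ^ (2 * m - 1) =
        (palpha m ^ (m - 1)) ⊗ₜ[ZMod 2] (palpha m ^ m) +
          (palpha m ^ m) ⊗ₜ[ZMod 2] (palpha m ^ (m - 1))) ∧
      ((palpha m) ⊗ₜ[ZMod 2] (1 : ProjRing m) +
          (1 : ProjRing m) ⊗ₜ[ZMod 2] (palpha m)) ^ (2 * m - 1) ≠ 0 := by
  have hm2 : 2 ≤ m := by
    rw [hm]
    calc 2 = 2 ^ 1 := by norm_num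
    _ ≤ 2 ^ t := Nat.pow_le_pow_right (by norm_num) ht
  set α := palpha m with hα
  -- α^(m+1) = 0 and beyond
  have hα0 : α ^ (m + 1) = 0 := by
    rw [hα, palpha, ← map_pow, Ideal.Quotient.eq_zero_iff_mem]
    exact Ideal.subset_span rfl
  have hαk : ∀ k, m + 1 ≤ k → α ^ k = 0 := by
    intro k hk
    have : α ^ k = α ^ (m + 1) * α ^ (k - (m + 1)) := by
      rw [← pow_add]; congr 1; omega
    rw [this, hα0, zero_mul]
  -- oddness of the binomial coefficients
  have hchoose : ∀ k, k < 2 * m →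
      ((Nat.choose (2 * m - 1) k : ℕ) : ZMod 2) = 1 := by
    intro k hk
    have h2m : 2 * m = 2 ^ (t + 1) := by rw [hm, pow_succ, mul_comm]
    rw [h2m] at hk ⊢
    exact choose_two_pow_sub_one (t + 1) k hk
  -- the expansion
  have hterm : ∀ k, (α ⊗ₜ[ZMod 2] (1 : ProjRing m)) ^ k *
      ((1 : ProjRing m) ⊗ₜ[ZMod 2] α) ^ (2 * m - 1 - k) *
      ((2 * m - 1).choose k : ProjRing m ⊗[ZMod 2] ProjRing m) =
      ((α ^ k) ⊗ₜ[ZMod 2] (α ^ (2 * m - 1 - k))) *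
        ((2 * m - 1).choose k : ProjRing m ⊗[ZMod 2] ProjRing m) := by
    intro k
    simp only [Algebra.TensorProduct.tmul_pow, Algebra.TensorProduct.tmul_mul_tmul,
      one_pow, mul_one, one_mul]
  have hcast : ∀ k, k < 2 * m →
      (((2 * m - 1).choose k : ℕ) : ProjRing m ⊗[ZMod 2] ProjRing m) = 1 := by
    intro k hk
    rw [← map_natCast (algebraMap (ZMod 2) (ProjRing m ⊗[ZMod 2] ProjRing m)),
      hchoose k hk, map_one]
  have hmain : ((α ⊗ₜ[ZMod 2] (1 : ProjRing m) +
        (1 : ProjRing m) ⊗ₜ[ZMod 2] α)) ^ (2 * m - 1) =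
      (α ^ (m - 1)) ⊗ₜ[ZMod 2] (α ^ m) + (α ^ m) ⊗ₜ[ZMod 2] (α ^ (m - 1)) := by
    have expand := add_pow (α ⊗ₜ[ZMod 2] (1 : ProjRing m))
      ((1 : ProjRing m) ⊗ₜ[ZMod 2] α) (2 * m - 1)
    refine expand.trans ?_
    have hn : 2 * m - 1 + 1 = 2 * m := by omega
    rw [hn]
    have hsub : ({m - 1, m} : Finset ℕ) ⊆ Finset.range (2 * m) := by
      intro k hk
      simp only [Finset.mem_insert, Finset.mem_singleton] at hk
      simp only [Finset.mem_range]
      omega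
    have hzero : ∀ k ∈ Finset.range (2 * m), k ∉ ({m - 1, m} : Finset ℕ) →
        (α ⊗ₜ[ZMod 2] (1 : ProjRing m)) ^ k *
        ((1 : ProjRing m) ⊗ₜ[ZMod 2] α) ^ (2 * m - 1 - k) *
        ((2 * m - 1).choose k : ProjRing m ⊗[ZMod 2] ProjRing m) = 0 := by
      intro k hk hk'
      simp only [Finset.mem_range] at hk
      simp only [Finset.mem_insert, Finset.mem_singleton, not_or] at hk'
      rw [hterm]
      rcases lt_or_ge k (m - 1) with h | h
      · have hz : α ^ (2 * m - 1 - k) = 0 := hαk _ (by omega)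
        rw [hz, TensorProduct.tmul_zero]
        exact zero_mul (M₀ := ProjRing m ⊗[ZMod 2] ProjRing m) _
      · have hz : α ^ k = 0 := hαk _ (by omega)
        rw [hz, TensorProduct.zero_tmul]
        exact zero_mul (M₀ := ProjRing m ⊗[ZMod 2] ProjRing m) _
    rw [← Finset.sum_subset hsub hzero]
    rw [Finset.sum_pair (by omega : m - 1 ≠ m)]
    rw [hterm, hterm]
    have e1 : 2 * m - 1 - (m - 1) = m := by omega
    have e2 : 2 * m - 1 - m = m - 1 := by omega
    rw [e1, e2, hcast _ (by omega), hcast _ (by omega)]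
    exact congrArg₂ (· + ·) (mul_one (M := ProjRing m ⊗[ZMod 2] ProjRing m) _) (mul_one (M := ProjRing m ⊗[ZMod 2] ProjRing m) _)
  refine ⟨hmain, ?_⟩
  rw [hmain]
  -- nonvanishing via the tensor-product basis
  intro h0
  set b : Module.Basis (Fin (m + 1)) (ZMod 2) (ProjRing m) := projBasis m with hb
  set B := Module.Basis.tensorProduct b b with hB
  have i1 : Fin (m + 1) := ⟨m - 1, by omega⟩
  have e1 : (α ^ (m - 1)) ⊗ₜ[ZMod 2] (α ^ m) = B (⟨m - 1, by omega⟩, ⟨m, by omega⟩) := by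
    rw [hB, Module.Basis.tensorProduct_apply, projBasis_apply, projBasis_apply]
  have e2 : (α ^ m) ⊗ₜ[ZMod 2] (α ^ (m - 1)) = B (⟨m, by omega⟩, ⟨m - 1, by omega⟩) := by
    rw [hB, Module.Basis.tensorProduct_apply, projBasis_apply, projBasis_apply]
  rw [e1, e2] at h0
  have := congrArg (fun z => (B.repr z) (⟨m - 1, by omega⟩, ⟨m, by omega⟩)) h0
  simp only [map_add, Module.Basis.repr_self, Finsupp.coe_add, Pi.add_apply, map_zero,
    Finsupp.coe_zero, Pi.zero_apply] at this
  rw [Finsupp.single_eq_same, Finsupp.single_eq_of_ne (by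
    intro h
    have := congrArg Prod.fst h
    simp only [Fin.mk.injEq] at this
    omega)] at this
  simp at this
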